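/- arXiv:2202.13784 — 4 statements merged into one kernel-verified Lean document; each statement's English description precedes it below -/
import Mathlib

section
/- Let R = K[x_1,...,x_n] be a polynomial ring over a field K, let J ⊆ R be an ideal and let f ∈ R. Then the radical of J + ⟨f⟩ equals the radical of ((J : f^∞) + ⟨f⟩) ∩ (J : (J : f^∞)), where J : f^∞ denotes the saturation of J by f and J : (J : f^∞) denotes the ideal quotient of J by the saturation. -/
/-- The saturation `I : J^∞` of an ideal `I` by an ideal `J`: the union (supremum) of the
increasing chain of ideal quotients `I : J^k` for `k → ∞`. -/
noncomputable def Ideal.sat {R : Type*} [CommRing R] (I J : Ideal R) : Ideal R :=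
  ⨆ k : ℕ, Submodule.colon I ((J ^ k : Ideal R) : Set R)

/-- Let `R = K[x_1,...,x_n]`, `J ⊆ R` an ideal, `f ∈ R`.  Then
`√(J + ⟨f⟩) = √(((J : f^∞) + ⟨f⟩) ∩ (J : (J : f^∞)))`. -/
theorem radical_add_eq_radical_inf_sat {K : Type*} [Field K] {n : ℕ}
    (J : Ideal (MvPolynomial (Fin n) K)) (f : MvPolynomial (Fin n) K) :
    (J ⊔ Ideal.span {f}).radical =
      ((Ideal.sat J (Ideal.span {f}) ⊔ Ideal.span {f}) ⊓
        Submodule.colon J (Ideal.sat J (Ideal.span {f}))).radical := by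
  set S := Ideal.sat J (Ideal.span {f}) with hSdef
  have hmono : Monotone (fun k : ℕ => Submodule.colon J ((Ideal.span {f} ^ k : Ideal (MvPolynomial (Fin n) K)) : Set (MvPolynomial (Fin n) K))) := by
    intro a b hab
    exact Submodule.colon_mono le_rfl (Ideal.pow_le_pow_right hab)
  obtain ⟨N, hN⟩ := monotone_stabilizes_iff_noetherian.mpr inferInstance (⟨_, hmono⟩ : ℕ →o _)
  have hSN : S = Submodule.colon J ((Ideal.span {f} ^ N : Ideal (MvPolynomial (Fin n) K)) : Set (MvPolynomial (Fin n) K)) := by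
    refine le_antisymm (iSup_le fun k => ?_) (le_iSup (fun k => Submodule.colon J ((Ideal.span {f} ^ k : Ideal (MvPolynomial (Fin n) K)) : Set (MvPolynomial (Fin n) K))) N)
    rcases le_total k N with h | h
    · exact hmono h
    · exact le_of_eq (hN k h).symm
  have hJcolon : ∀ I : Ideal (MvPolynomial (Fin n) K), J ≤ Submodule.colon J I := by
    intro I x hx
    rw [Submodule.mem_colon]
    intro p _
    exact Ideal.mul_mem_right p J hx
  have hJS : J ≤ S := (hJcolon (Ideal.span {f} ^ 0)).trans (le_iSup (fun k => Submodule.colon J ((Ideal.span {f} ^ k : Ideal (MvPolynomial (Fin n) K)) : Set (MvPolynomial (Fin n) K))) 0)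
  have hf : f ^ (N + 1) ∈ Submodule.colon J S := by
    rw [Submodule.mem_colon]
    intro p hp
    rw [hSN, SetLike.mem_coe, Submodule.mem_colon] at hp
    have h1 : p * f ^ N ∈ J := by
      have := hp (f ^ N) (Ideal.pow_mem_pow (Ideal.mem_span_singleton_self f) N)
      rwa [smul_eq_mul] at this
    have h2 : f ^ (N + 1) • p = f * (p * f ^ N) := by
      rw [smul_eq_mul]; ring
    rw [h2]
    exact Ideal.mul_mem_left J f h1
  apply le_antisymm
  · have : J ⊔ Ideal.span {f} ≤
        ((S ⊔ Ideal.span {f}) ⊓ Submodule.colon J S).radical := by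
      refine sup_le ?_ ?_
      · refine le_trans (le_inf (hJS.trans le_sup_left) (hJcolon S)) Ideal.le_radical
      · rw [Ideal.span_singleton_le_iff_mem]
        refine ⟨N + 1, Ideal.mem_inf.mpr ⟨?_, hf⟩⟩
        exact Ideal.mem_sup_right (Ideal.pow_mem_of_mem _ (Ideal.mem_span_singleton_self f) _ (Nat.succ_pos N))
    exact (Ideal.radical_mono this).trans (le_of_eq (Ideal.radical_idem _))
  · have : (S ⊔ Ideal.span {f}) ⊓ Submodule.colon J S ≤ (J ⊔ Ideal.span {f}).radical := by
      intro g hg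
      obtain ⟨hg1, hg2⟩ := Ideal.mem_inf.mp hg
      obtain ⟨s, hs, h, hh, rfl⟩ := Submodule.mem_sup.mp hg1
      refine ⟨2, ?_⟩
      have he : (s + h) ^ 2 = (s + h) * s + (s + h) * h := by ring
      rw [he]
      refine Ideal.add_mem _ ?_ ?_
      · have := Submodule.mem_colon.mp hg2 s hs
        rw [smul_eq_mul] at this
        exact Ideal.mem_sup_left this
      · exact Ideal.mem_sup_right (Ideal.mul_mem_left _ _ hh)
    exact (Ideal.radical_mono this).trans (le_of_eq (Ideal.radical_idem _))
end

section
/- Let R = K[x_1,...,x_n] be a polynomial ring over a field K and let J ⊆ R be an ideal and f ∈ R. Then the radical of the double quotient J : (J : f^∞) equals the intersection over all g ∈ J : f^∞ of the radicals of the ideal quotients J : g. In particular, f lies in the radical of J : (J : f^∞). -/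
lemma radical_colon_eq_iInf {R : Type*} [CommRing R] [IsNoetherianRing R] (J S : Ideal R) :
    (Submodule.colon J S).radical = ⨅ g ∈ S, (Submodule.colon J (Ideal.span {g})).radical := by
  apply le_antisymm
  · refine le_iInf fun g => le_iInf fun hg => Ideal.radical_mono ?_
    exact Submodule.colon_mono le_rfl (Ideal.span_le.mpr (Set.singleton_subset_iff.mpr hg))
  · intro p hp
    simp only [Ideal.mem_iInf] at hp
    obtain ⟨T, hT⟩ := IsNoetherian.noetherian S
    have key : ∀ g ∈ (T : Set R), ∃ m : ℕ, p ^ m * g ∈ J := by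
      intro g hg
      have hgS : g ∈ S := hT ▸ Ideal.subset_span hg
      obtain ⟨m, hm⟩ := Ideal.mem_radical_iff.mp (hp g hgS)
      exact ⟨m, by simpa using Submodule.mem_colon.mp hm g (Ideal.mem_span_singleton_self g)⟩
    choose! m hm using key
    set N := T.sup m with hN
    refine Ideal.mem_radical_iff.mpr ⟨N, Submodule.mem_colon.mpr fun s hs => ?_⟩
    rw [← hT] at hs
    refine Submodule.span_induction (fun g hg => ?_) (by simp) (fun x y _ _ hx hy => ?_)
      (fun r x _ hx => ?_) hs
    · have h1 : p ^ (m g) * g ∈ J := hm g hg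
      have h2 : N = (N - m g) + m g := (Nat.sub_add_cancel (Finset.le_sup hg)).symm
      have : p ^ N • g = p ^ (N - m g) * (p ^ (m g) * g) := by
        rw [smul_eq_mul, ← mul_assoc, ← pow_add, ← h2]
      rw [this]
      exact Ideal.mul_mem_left _ _ h1
    · rw [smul_add]; exact Ideal.add_mem _ hx hy
    · rw [smul_comm]; exact Ideal.mul_mem_left _ _ hx

lemma sat_eq_colon {R : Type*} [CommRing R] [IsNoetherianRing R] (J : Ideal R) (f : R) :
    ∃ N : ℕ, Ideal.sat J (Ideal.span {f}) = Submodule.colon J ((Ideal.span {f} ^ N : Ideal R) : Set R) := by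
  set F : ℕ →o Ideal R :=
    ⟨fun k => Submodule.colon J ((Ideal.span {f} ^ k : Ideal R) : Set R), fun k l hkl =>
      Submodule.colon_mono le_rfl (Ideal.pow_le_pow_right hkl)⟩
  obtain ⟨N, hN⟩ := monotone_stabilizes_iff_noetherian.mpr inferInstance F
  refine ⟨N, le_antisymm (iSup_le fun k => ?_) (le_iSup (fun k => Submodule.colon J
    ((Ideal.span {f} ^ k : Ideal R) : Set R)) N)⟩
  have : F k ≤ F (max k N) := F.monotone (le_max_left _ _)
  rw [← hN (max k N) (le_max_right _ _)] at this
  exact this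

/-- Let `R = K[x_1,...,x_n]`, `J ⊆ R` an ideal and `f ∈ R`.  Then
`√(J : (J : f^∞)) = ⋂_{g ∈ J : f^∞} √(J : g)`; in particular
`f ∈ √(J : (J : f^∞))`. -/
theorem radical_colon_sat {K : Type*} [Field K] {n : ℕ}
    (J : Ideal (MvPolynomial (Fin n) K)) (f : MvPolynomial (Fin n) K) :
    (Submodule.colon J (Ideal.sat J (Ideal.span {f}))).radical =
      (⨅ g ∈ Ideal.sat J (Ideal.span {f}),
        (Submodule.colon J (Ideal.span {g})).radical) ∧
    f ∈ (Submodule.colon J (Ideal.sat J (Ideal.span {f}))).radical := by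
  refine ⟨radical_colon_eq_iInf J _, ?_⟩
  obtain ⟨N, hN⟩ := sat_eq_colon J f
  refine Ideal.mem_radical_iff.mpr ⟨N, Submodule.mem_colon.mpr fun p hp => ?_⟩
  rw [hN] at hp
  have hfN : f ^ N ∈ Ideal.span {f} ^ N := by
    rw [Ideal.span_singleton_pow]; exact Ideal.mem_span_singleton_self _
  have := Submodule.mem_colon.mp hp (f ^ N) hfN
  simpa [smul_eq_mul, mul_comm] using this
end

section
/- Let R = K[x_1,...,x_n] be a polynomial ring over a field K and let f_1,...,f_c ∈ R with c ≤ n. Define ideals recursively by J_0 = ⟨0⟩, K_i = J_{i-1} : (J_{i-1} : f_i^∞), and J_i = ((J_{i-1} : f_i^∞) + ⟨f_i⟩) : (∏_{j=1}^{i} K_j)^∞ for 1 ≤ i ≤ c. Then for every i with 0 ≤ i ≤ c, the radical of ⟨f_1,...,f_i⟩ equals the radical of J_i ∩ ⋂_{j=1}^{i} (K_j + ⟨f_{j+1},...,f_i⟩). -/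
section Aux
variable {R : Type*} [CommRing R]

lemma colon_anti {I P Q : Ideal R} (h : P ≤ Q) :
    Submodule.colon I Q ≤ Submodule.colon I P := fun _ hx =>
  Submodule.mem_colon.2 fun p hp => Submodule.mem_colon.1 hx p (h hp)

lemma sat_chain (I P : Ideal R) : Monotone fun k : ℕ => Submodule.colon I ((P ^ k : Ideal R) : Set R) :=
  fun _ _ hab => colon_anti (Ideal.pow_le_pow_right hab)

lemma mem_sat {I P : Ideal R} {x : R} : x ∈ I.sat P ↔ ∃ k, x ∈ Submodule.colon I ((P ^ k : Ideal R) : Set R) :=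
  Submodule.mem_iSup_of_chain ⟨_, sat_chain I P⟩ x

lemma le_colon_self (I P : Ideal R) : I ≤ Submodule.colon I P := fun x hx =>
  Submodule.mem_colon.2 fun p _ => by rw [smul_eq_mul]; exact I.mul_mem_right p hx

lemma le_sat (I P : Ideal R) : I ≤ I.sat P :=
  le_trans (le_colon_self I (P ^ 0)) (le_iSup (fun k : ℕ => Submodule.colon I ((P ^ k : Ideal R) : Set R)) 0)

lemma sup_pow_le (A P : Ideal R) : ∀ k, (A ⊔ P) ^ k ≤ A ⊔ P ^ k
  | 0 => by simp
  | k + 1 => by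
    calc (A ⊔ P) ^ (k + 1) = (A ⊔ P) ^ k * (A ⊔ P) := pow_succ _ _
    _ ≤ (A ⊔ P ^ k) * (A ⊔ P) := Ideal.mul_mono_left (sup_pow_le A P k)
    _ = A * A ⊔ A * P ⊔ (P ^ k * A ⊔ P ^ k * P) := by
          rw [Ideal.sup_mul, Ideal.mul_sup, Ideal.mul_sup]
    _ ≤ A ⊔ P ^ (k + 1) := sup_le (sup_le (le_sup_of_le_left Ideal.mul_le_left)
          (le_sup_of_le_left Ideal.mul_le_left))
        (sup_le (le_sup_of_le_left Ideal.mul_le_right)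
          (le_sup_of_le_right (le_of_eq (pow_succ P k).symm)))

/-- Saturation trick: `√A = √(sat(A,P) ⊓ (A ⊔ P))`. -/
lemma radical_eq_sat_inf (A P : Ideal R) :
    A.radical = (A.sat P ⊓ (A ⊔ P)).radical := by
  apply le_antisymm
  · exact Ideal.radical_mono (le_inf (le_sat A P) le_sup_left)
  · rw [Ideal.radical_le_radical_iff]
    rintro x ⟨hx1, hx2⟩
    obtain ⟨k, hk⟩ := mem_sat.1 hx1
    have hxk : x ^ k ∈ A ⊔ P ^ k := sup_pow_le A P k (Ideal.pow_mem_pow hx2 k)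
    obtain ⟨a, ha, p, hp, hap⟩ := Submodule.mem_sup.1 hxk
    refine Ideal.mem_radical_iff.mpr ⟨k + 1, ?_⟩
    have h1 : x * p ∈ A := by
      have := Submodule.mem_colon.1 hk p hp; rwa [smul_eq_mul] at this
    have : x ^ (k + 1) = x * a + x * p := by rw [pow_succ', ← hap, mul_add]
    rw [this]
    exact A.add_mem (A.mul_mem_left x ha) h1

/-- Quotient trick: for `I ≤ J`, `√I = √(J ⊓ (I : J))`. -/
lemma radical_eq_colon_inf {I J : Ideal R} (h : I ≤ J) :
    I.radical = (J ⊓ Submodule.colon I J).radical := by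
  apply le_antisymm
  · exact Ideal.radical_mono (le_inf h (le_colon_self I J))
  · rw [Ideal.radical_le_radical_iff]
    rintro x ⟨hx1, hx2⟩
    refine Ideal.mem_radical_iff.mpr ⟨2, ?_⟩
    have := Submodule.mem_colon.1 hx2 x hx1
    rwa [smul_eq_mul, ← pow_two] at this

/-- In a Noetherian ring, `g ∈ √(I : sat(I, g))`. -/
lemma mem_radical_colon_sat [IsNoetherianRing R] (I : Ideal R) (g : R) :
    g ∈ (Submodule.colon I (I.sat (Ideal.span {g}))).radical := by
  obtain ⟨N, hN⟩ := monotone_stabilizes_iff_noetherian.mpr inferInstance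
    ⟨_, sat_chain I (Ideal.span {g})⟩
  refine Ideal.mem_radical_iff.mpr ⟨N, Submodule.mem_colon.2 fun p hp => ?_⟩
  obtain ⟨k, hk⟩ := mem_sat.1 hp
  have hpN : p ∈ Submodule.colon I ((Ideal.span {g} ^ N : Ideal R) : Set R) := by
    have h1 : p ∈ Submodule.colon I ((Ideal.span {g} ^ max k N : Ideal R) : Set R) :=
      sat_chain I (Ideal.span {g}) (le_max_left k N) hk
    have h2 : Submodule.colon I ((Ideal.span {g} ^ N : Ideal R) : Set R)
        = Submodule.colon I ((Ideal.span {g} ^ max k N : Ideal R) : Set R) := hN (max k N) (le_max_right k N)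
    rw [h2]; exact h1
  have hg : g ^ N ∈ Ideal.span {g} ^ N :=
    Ideal.pow_mem_pow (Ideal.mem_span_singleton_self g) N
  have := Submodule.mem_colon.1 hpN _ hg
  rw [smul_eq_mul] at this
  rw [smul_eq_mul, mul_comm]
  exact this

/-- `√((A ⊓ B) ⊔ C) = √((A ⊔ C) ⊓ (B ⊔ C))`. -/
lemma radical_inf_sup (A B C : Ideal R) :
    ((A ⊓ B) ⊔ C).radical = ((A ⊔ C) ⊓ (B ⊔ C)).radical := by
  apply le_antisymm
  · exact Ideal.radical_mono (sup_le
      (le_inf (le_sup_of_le_left inf_le_left) (le_sup_of_le_left inf_le_right))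
      (le_inf le_sup_right le_sup_right))
  · rw [Ideal.radical_le_radical_iff]
    have h1 : (A ⊔ C) * (B ⊔ C) ≤ (A ⊓ B) ⊔ C := by
      rw [Ideal.sup_mul, Ideal.mul_sup, Ideal.mul_sup]
      exact sup_le (sup_le (le_sup_of_le_left Ideal.mul_le_inf)
          (le_sup_of_le_right Ideal.mul_le_right))
        (sup_le (le_sup_of_le_right Ideal.mul_le_left)
          (le_sup_of_le_right Ideal.mul_le_left))
    calc (A ⊔ C) ⊓ (B ⊔ C) ≤ ((A ⊔ C) * (B ⊔ C)).radical := by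
          rw [Ideal.radical_mul]; exact inf_le_inf Ideal.le_radical Ideal.le_radical
    _ ≤ ((A ⊓ B) ⊔ C).radical := Ideal.radical_mono h1

lemma radical_sup_left (A B : Ideal R) : (A ⊔ B).radical = (A.radical ⊔ B).radical := by
  apply le_antisymm
  · exact Ideal.radical_mono (sup_le_sup_right Ideal.le_radical B)
  · rw [Ideal.radical_le_radical_iff]
    exact sup_le (Ideal.radical_mono le_sup_left)
      (le_trans le_sup_right Ideal.le_radical)

end Aux

section AuxFinset
variable {R : Type*} [CommRing R] {ι : Type*} [DecidableEq ι]

lemma radical_finset_inf (s : Finset ι) (A : ι → Ideal R) :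
    (⨅ j ∈ s, A j).radical = ⨅ j ∈ s, (A j).radical := by
  induction s using Finset.induction with
  | empty => simp
  | insert _ _ ha ih => rw [Finset.iInf_insert, Finset.iInf_insert, Ideal.radical_inf, ih]

lemma finset_inf_le_radical_prod (s : Finset ι) (A : ι → Ideal R) :
    (⨅ j ∈ s, A j) ≤ (∏ j ∈ s, A j).radical := by
  induction s using Finset.induction with
  | empty => simp
  | @insert a s ha ih =>
    rw [Finset.iInf_insert, Finset.prod_insert ha]
    rintro x ⟨hx1, hx2⟩
    obtain ⟨k, hk⟩ := Ideal.mem_radical_iff.1 (ih hx2)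
    exact Ideal.mem_radical_iff.mpr ⟨k + 1, by
      rw [pow_succ']; exact Ideal.mul_mem_mul hx1 hk⟩

lemma prod_sup_le (s : Finset ι) (A B : ι → Ideal R) (C : Ideal R)
    (h : ∀ j ∈ s, B j ≤ C) :
    (∏ j ∈ s, (A j ⊔ B j)) ≤ (∏ j ∈ s, A j) ⊔ C := by
  induction s using Finset.induction with
  | empty => simp
  | @insert a s ha ih =>
    rw [Finset.prod_insert ha, Finset.prod_insert ha]
    have hBa : B a ≤ C := h a (Finset.mem_insert_self a s)
    calc (A a ⊔ B a) * ∏ j ∈ s, (A j ⊔ B j)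
        ≤ (A a ⊔ B a) * ((∏ j ∈ s, A j) ⊔ C) :=
          Ideal.mul_mono_right (ih fun j hj => h j (Finset.mem_insert_of_mem hj))
      _ = A a * (∏ j ∈ s, A j) ⊔ A a * C ⊔ (B a * (∏ j ∈ s, A j) ⊔ B a * C) := by
          rw [Ideal.sup_mul, Ideal.mul_sup, Ideal.mul_sup]
      _ ≤ (A a * ∏ j ∈ s, A j) ⊔ C := by
          refine sup_le (sup_le le_sup_left (le_sup_of_le_right Ideal.mul_le_right)) ?_
          exact sup_le (le_sup_of_le_right (le_trans Ideal.mul_le_left hBa))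
            (le_sup_of_le_right Ideal.mul_le_right)

lemma radical_iInf_sup (s : Finset ι) (A : ι → Ideal R) (C : Ideal R) :
    ((⨅ j ∈ s, A j) ⊔ C).radical = (⨅ j ∈ s, (A j ⊔ C)).radical := by
  induction s using Finset.induction with
  | empty => simp
  | @insert a s ha ih =>
    rw [Finset.iInf_insert, Finset.iInf_insert, radical_inf_sup, Ideal.radical_inf, ih,
      ← Ideal.radical_inf]

lemma inf_absorb (a x b c : Ideal R) (h : b ⊓ c ≤ x) :
    a ⊓ x ⊓ b ⊓ c = a ⊓ (b ⊓ c) := by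
  apply le_antisymm
  · exact le_inf (le_trans inf_le_left (le_trans inf_le_left inf_le_left))
      (le_inf (le_trans inf_le_left inf_le_right) inf_le_right)
  · exact le_inf (le_inf (le_inf inf_le_left (le_trans inf_le_right h))
      (le_trans inf_le_right inf_le_left)) (le_trans inf_le_right inf_le_right)

end AuxFinset


/-- Let `R = K[x_1,...,x_n]`, `f_1,...,f_c ∈ R` with `c ≤ n`.  Define recursively
`J_0 = ⟨0⟩`, `K_i = J_{i-1} : (J_{i-1} : f_i^∞)` and
`J_i = ((J_{i-1} : f_i^∞) + ⟨f_i⟩) : (∏_{j=1}^{i} K_j)^∞`.  Then for every `0 ≤ i ≤ c`,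
`√⟨f_1,...,f_i⟩ = √(J_i ∩ ⋂_{j=1}^{i} (K_j + ⟨f_{j+1},...,f_i⟩))`. -/
theorem loop_invariant_radical {Fld : Type*} [Field Fld] {n c : ℕ} (hc : c ≤ n)
    (f : ℕ → MvPolynomial (Fin n) Fld)
    (J K : ℕ → Ideal (MvPolynomial (Fin n) Fld))
    (hJ0 : J 0 = ⊥)
    (hK : ∀ i, 1 ≤ i → i ≤ c →
      K i = Submodule.colon (J (i - 1)) (Ideal.sat (J (i - 1)) (Ideal.span {f i})))
    (hJ : ∀ i, 1 ≤ i → i ≤ c →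
      J i = Ideal.sat (Ideal.sat (J (i - 1)) (Ideal.span {f i}) ⊔ Ideal.span {f i})
        (∏ j ∈ Finset.Icc 1 i, K j)) :
    ∀ i ≤ c,
      (Ideal.span (f '' Set.Icc 1 i)).radical =
        (J i ⊓ ⨅ j ∈ Finset.Icc 1 i,
          (K j ⊔ Ideal.span (f '' Set.Icc (j + 1) i))).radical := by
  intro i
  induction i with
  | zero =>
    intro _
    rw [Set.Icc_eq_empty (by omega), Finset.Icc_eq_empty (by omega), hJ0]
    simp
  | succ i ih =>
    intro hic
    have hi : i ≤ c := Nat.le_of_succ_le hic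
    have IH := ih hi
    have hKd := hK (i + 1) (Nat.le_add_left 1 i) hic
    have hJd := hJ (i + 1) (Nat.le_add_left 1 i) hic
    simp only [Nat.add_sub_cancel] at hKd hJd
    -- set-theoretic splittings
    have hFsplit : Ideal.span (f '' Set.Icc 1 (i + 1))
        = Ideal.span (f '' Set.Icc 1 i) ⊔ Ideal.span {f (i + 1)} := by
      rw [show Set.Icc 1 (i + 1) = Set.Icc 1 i ∪ {i + 1} by
        ext x; simp only [Set.mem_Icc, Set.mem_union, Set.mem_singleton_iff]; omega,
        Set.image_union, Set.image_singleton, Ideal.span_union]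
    have hMj : ∀ j ∈ Finset.Icc 1 i,
        (K j ⊔ Ideal.span (f '' Set.Icc (j + 1) i)) ⊔ Ideal.span {f (i + 1)}
          = K j ⊔ Ideal.span (f '' Set.Icc (j + 1) (i + 1)) := by
      intro j hj
      have hj2 : j ≤ i := (Finset.mem_Icc.1 hj).2
      rw [show Set.Icc (j + 1) (i + 1) = Set.Icc (j + 1) i ∪ {i + 1} by
        ext x; simp only [Set.mem_Icc, Set.mem_union, Set.mem_singleton_iff]; omega,
        Set.image_union, Set.image_singleton, Ideal.span_union, sup_assoc]
    have hInsert : Finset.Icc 1 (i + 1) = insert (i + 1) (Finset.Icc 1 i) := by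
      ext x; simp only [Finset.mem_Icc, Finset.mem_insert]; omega
    have hMi1 : K (i + 1) ⊔ Ideal.span (f '' Set.Icc (i + 1 + 1) (i + 1)) = K (i + 1) := by
      rw [Set.Icc_eq_empty (by omega), Set.image_empty, Ideal.span_empty, sup_bot_eq]
    have hQsplit : (⨅ j ∈ Finset.Icc 1 (i + 1),
          (K j ⊔ Ideal.span (f '' Set.Icc (j + 1) (i + 1))))
        = K (i + 1) ⊓ ⨅ j ∈ Finset.Icc 1 i,
            (K j ⊔ Ideal.span (f '' Set.Icc (j + 1) (i + 1))) := by
      rw [hInsert, Finset.iInf_insert, hMi1]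
    -- key radical equalities
    have rI : (J i).radical
        = (Ideal.sat (J i) (Ideal.span {f (i + 1)}) ⊓ K (i + 1)).radical := by
      rw [hKd]; exact radical_eq_colon_inf (le_sat _ _)
    have hgK : f (i + 1) ∈ (K (i + 1)).radical := by
      rw [hKd]; exact mem_radical_colon_sat _ _
    have e6 : (K (i + 1) ⊔ Ideal.span {f (i + 1)}).radical = (K (i + 1)).radical := by
      apply le_antisymm
      · rw [Ideal.radical_le_radical_iff]
        exact sup_le Ideal.le_radical (((Ideal.span_singleton_le_iff_mem _).2 hgK))
      · exact Ideal.radical_mono le_sup_left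
    have e5 : (J i ⊔ Ideal.span {f (i + 1)}).radical
        = ((Ideal.sat (J i) (Ideal.span {f (i + 1)}) ⊔ Ideal.span {f (i + 1)})
            ⊓ (K (i + 1) ⊔ Ideal.span {f (i + 1)})).radical := by
      rw [radical_sup_left, rI, ← radical_sup_left, radical_inf_sup]
    have e7 : (Ideal.sat (J i) (Ideal.span {f (i + 1)}) ⊔ Ideal.span {f (i + 1)}).radical
        = (J (i + 1) ⊓ ((Ideal.sat (J i) (Ideal.span {f (i + 1)}) ⊔ Ideal.span {f (i + 1)})
            ⊔ ∏ j ∈ Finset.Icc 1 (i + 1), K j)).radical := by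
      rw [hJd]; exact radical_eq_sat_inf _ _
    have e4 : ((⨅ j ∈ Finset.Icc 1 i, (K j ⊔ Ideal.span (f '' Set.Icc (j + 1) i)))
          ⊔ Ideal.span {f (i + 1)}).radical
        = (⨅ j ∈ Finset.Icc 1 i,
            (K j ⊔ Ideal.span (f '' Set.Icc (j + 1) (i + 1)))).radical := by
      rw [radical_iInf_sup]
      congr 1
      exact iInf_congr fun j => iInf_congr fun hj => hMj j hj
    -- absorption of the saturation factor
    have hFrad : Ideal.span (f '' Set.Icc 1 (i + 1))
        ≤ ((Ideal.sat (J i) (Ideal.span {f (i + 1)}) ⊔ Ideal.span {f (i + 1)})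
            ⊔ ∏ j ∈ Finset.Icc 1 (i + 1), K j).radical := by
      rw [hFsplit]
      refine sup_le ?_ ?_
      · calc Ideal.span (f '' Set.Icc 1 i) ≤ (Ideal.span (f '' Set.Icc 1 i)).radical :=
              Ideal.le_radical
          _ = _ := IH
          _ ≤ _ := Ideal.radical_mono (le_trans inf_le_left
              (le_trans (le_sat _ _) (le_sup_of_le_left le_sup_left)))
      · exact le_trans (le_sup_of_le_left le_sup_right) Ideal.le_radical
    have habs : (K (i + 1)).radical ⊓ (⨅ j ∈ Finset.Icc 1 i,
          (K j ⊔ Ideal.span (f '' Set.Icc (j + 1) (i + 1)))).radical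
        ≤ ((Ideal.sat (J i) (Ideal.span {f (i + 1)}) ⊔ Ideal.span {f (i + 1)})
            ⊔ ∏ j ∈ Finset.Icc 1 (i + 1), K j).radical := by
      rw [← Ideal.radical_inf, ← hQsplit, Ideal.radical_le_radical_iff]
      calc (⨅ j ∈ Finset.Icc 1 (i + 1),
            (K j ⊔ Ideal.span (f '' Set.Icc (j + 1) (i + 1))))
          ≤ (∏ j ∈ Finset.Icc 1 (i + 1),
              (K j ⊔ Ideal.span (f '' Set.Icc (j + 1) (i + 1)))).radical :=
            finset_inf_le_radical_prod _ _
        _ ≤ _ := by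
            rw [Ideal.radical_le_radical_iff]
            refine le_trans (prod_sup_le _ _ _ (Ideal.span (f '' Set.Icc 1 (i + 1)))
              fun j hj => Ideal.span_mono (Set.image_mono
                (Set.Icc_subset_Icc_left (by omega)))) (sup_le ?_ hFrad)
            exact le_trans le_sup_right Ideal.le_radical
    -- final chain
    calc (Ideal.span (f '' Set.Icc 1 (i + 1))).radical
        = ((J i ⊓ ⨅ j ∈ Finset.Icc 1 i, (K j ⊔ Ideal.span (f '' Set.Icc (j + 1) i)))
            ⊔ Ideal.span {f (i + 1)}).radical := by
          rw [hFsplit, radical_sup_left, IH, ← radical_sup_left]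
      _ = (J i ⊔ Ideal.span {f (i + 1)}).radical
            ⊓ ((⨅ j ∈ Finset.Icc 1 i, (K j ⊔ Ideal.span (f '' Set.Icc (j + 1) i)))
                ⊔ Ideal.span {f (i + 1)}).radical := by
          rw [radical_inf_sup, Ideal.radical_inf]
      _ = ((J (i + 1)).radical
            ⊓ ((Ideal.sat (J i) (Ideal.span {f (i + 1)}) ⊔ Ideal.span {f (i + 1)})
                ⊔ ∏ j ∈ Finset.Icc 1 (i + 1), K j).radical
            ⊓ (K (i + 1)).radical)
            ⊓ (⨅ j ∈ Finset.Icc 1 i,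
                (K j ⊔ Ideal.span (f '' Set.Icc (j + 1) (i + 1)))).radical := by
          rw [e5, Ideal.radical_inf, e6, e7, Ideal.radical_inf, e4]
      _ = (J (i + 1)).radical ⊓ ((K (i + 1)).radical
            ⊓ (⨅ j ∈ Finset.Icc 1 i,
                (K j ⊔ Ideal.span (f '' Set.Icc (j + 1) (i + 1)))).radical) :=
          inf_absorb _ _ _ _ habs
      _ = (J (i + 1) ⊓ ⨅ j ∈ Finset.Icc 1 (i + 1),
            (K j ⊔ Ideal.span (f '' Set.Icc (j + 1) (i + 1)))).radical := by
          rw [hQsplit, Ideal.radical_inf, Ideal.radical_inf]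
end

section
/- Let R = K[x_1,...,x_n] be a polynomial ring over a field K, let I ⊆ R be an ideal and let J = ⟨g_1,...,g_t⟩ ⊆ R. Then the radical of I : J equals the radical of (I : g_1) ∩ ((I + ⟨g_1⟩) : g_2) ∩ ... ∩ ((I + ⟨g_1,...,g_{t-1}⟩) : g_t). -/
private lemma aux_pow_mul_mem {R : Type*} [CommRing R] {t : ℕ} (I : Ideal R) (g : Fin t → R)
    (p : R) (hp : ∀ i : Fin t, p * g i ∈ I ⊔ Ideal.span (g '' {j | j < i})) :
    ∀ m : ℕ, ∀ i : Fin t, (i : ℕ) < m → p ^ m * g i ∈ I := by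
  intro m
  induction m using Nat.strong_induction_on with
  | _ m IH =>
    intro i him
    obtain ⟨k, rfl⟩ : ∃ k, m = k + 1 := ⟨m - 1, by omega⟩
    obtain ⟨a, ha, b, hb, hab⟩ := Submodule.mem_sup.mp (hp i)
    have key : Ideal.span (g '' {j | j < i}) ≤ Submodule.colon I (Ideal.span {p ^ k}) := by
      rw [Ideal.span_le]
      rintro x ⟨j, hj, rfl⟩
      rw [SetLike.mem_coe, Ideal.mem_colon_span_singleton]
      have hjm : (j : ℕ) < k := by
        have : (j : ℕ) < (i : ℕ) := hj
        omega
      rw [mul_comm]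
      exact IH k (by omega) j hjm
    have hbm : p ^ k * b ∈ I := by
      have := key hb
      rw [Ideal.mem_colon_span_singleton] at this
      rwa [mul_comm] at this
    have heq : p ^ (k + 1) * g i = p ^ k * a + p ^ k * b := by
      have : p ^ (k + 1) * g i = p ^ k * (a + b) := by rw [hab]; ring
      rw [this]; ring
    rw [heq]
    exact I.add_mem (I.mul_mem_left _ ha) hbm

/-- Let `R = K[x_1,...,x_n]`, `I ⊆ R` an ideal and `J = ⟨g_1,...,g_t⟩`.  Then
`√(I : J) = √((I : g_1) ∩ ((I + ⟨g_1⟩) : g_2) ∩ ⋯ ∩ ((I + ⟨g_1,...,g_{t-1}⟩) : g_t))`. -/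
theorem radical_colon_eq_radical_iInf {K : Type*} [Field K] {n t : ℕ}
    (I : Ideal (MvPolynomial (Fin n) K)) (g : Fin t → MvPolynomial (Fin n) K)
    (J : Ideal (MvPolynomial (Fin n) K)) (hJ : J = Ideal.span (Set.range g)) :
    (Submodule.colon I J).radical =
      (⨅ i : Fin t,
        Submodule.colon (I ⊔ Ideal.span (g '' {j | j < i})) (Ideal.span {g i})).radical := by
  apply le_antisymm
  · apply Ideal.radical_mono
    refine le_iInf fun i => Submodule.colon_mono le_sup_left ?_
    rw [hJ, SetLike.coe_subset_coe, Ideal.span_le]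
    rintro x rfl
    exact Ideal.subset_span ⟨i, rfl⟩
  · have h2 : (⨅ i : Fin t,
        Submodule.colon (I ⊔ Ideal.span (g '' {j | j < i})) (Ideal.span {g i})) ≤
        (Submodule.colon I J).radical := by
      intro p hp
      simp only [Submodule.mem_iInf] at hp
      have hp' : ∀ i : Fin t, p * g i ∈ I ⊔ Ideal.span (g '' {j | j < i}) := by
        intro i
        have := hp i
        rwa [Ideal.mem_colon_span_singleton] at this
      refine ⟨t, ?_⟩
      rw [Submodule.mem_colon]
      intro q hq
      rw [smul_eq_mul]
      have hle : J ≤ Submodule.colon I (Ideal.span {p ^ t}) := by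
        rw [hJ, Ideal.span_le]
        rintro x ⟨i, rfl⟩
        rw [SetLike.mem_coe, Ideal.mem_colon_span_singleton, mul_comm]
        exact aux_pow_mul_mem I g p hp' t i i.isLt
      have := hle hq
      rw [Ideal.mem_colon_span_singleton] at this
      rwa [mul_comm] at this
    calc _ ≤ (Submodule.colon I J).radical.radical := Ideal.radical_mono h2
    _ = _ := Ideal.radical_idem _
end
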